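/- Tail bound for generation sizes under exponential moments: let (Z_k) be a Galton–Watson process with Z_0 = 1, offspring mean μ = e^{ϑ} > 1, and suppose W = lim μ^{−k}Z_k satisfies E[e^{a_* W}] < ∞ for some a_* > 0 and the uniform martingale deviation bound P(|W_k − W| ≥ ε) ≤ C e^{−c ε^{2/3} μ^{k/3}} holds for all ε > 0, k ∈ ℕ. Then for every δ > 0 there exist constants such that P(Σ_{k=0}^{R} Z_k ≥ e^{(1+δ)ϑR}) ≤ C₁(R+1) exp(−a_* e^{δϑR}/(2(R+1))) + C₂(R+1) exp(−c (e^{δϑR}/(2(R+1)))^{2/3}), which decays super-exponentially in R. -/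

import Mathlib

open MeasureTheory ProbabilityTheory Finset

/-- tail bound for generation sizes. For a supercritical Galton–Watson process
with `Z_0 = 1`, mean `μ = e^ϑ`, `W_k = μ^{−k}Z_k`, limit `W` with `E[e^{a_* W}] < ∞`, and the
martingale deviation bound `P(|W_k − W| ≥ ε) ≤ C e^{−c ε^{2/3} μ^{k/3}}`, for every `δ > 0`
there are constants `C₁, C₂ > 0` with
`P(Σ_{k=0}^R Z_k ≥ e^{(1+δ)ϑR}) ≤ C₁(R+1)exp(−a_* e^{δϑR}/(2(R+1))) +
C₂(R+1)exp(−c(e^{δϑR}/(2(R+1)))^{2/3})`. -/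
theorem generation_size_tail {Ω : Type*} [MeasureSpace Ω]
    [IsProbabilityMeasure (ℙ : Measure Ω)]
    (Z : ℕ → Ω → ℕ) (hZmeas : ∀ k, Measurable (Z k)) (hZ0 : ∀ ω, Z 0 ω = 1)
    (ϑ : ℝ) (hϑ : 0 < ϑ)
    (W : Ω → ℝ) (hWmeas : Measurable W)
    (astar C c : ℝ) (hastar : 0 < astar) (hC : 0 < C) (hc : 0 < c)
    (hint : Integrable (fun ω => Real.exp (astar * W ω)))
    (hdev : ∀ ε > (0 : ℝ), ∀ k : ℕ,
      (ℙ {ω | ε ≤ |Real.exp (-(ϑ * k)) * (Z k ω : ℝ) - W ω|}).toReal ≤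
        C * Real.exp (-(c * ε ^ ((2 : ℝ) / 3) * Real.exp (ϑ * k / 3))))
    (δ : ℝ) (hδ : 0 < δ) :
    ∃ C₁ > 0, ∃ C₂ > 0, ∀ R : ℕ,
      (ℙ {ω | Real.exp ((1 + δ) * ϑ * R) ≤ ∑ k ∈ range (R + 1), (Z k ω : ℝ)}).toReal ≤
        C₁ * (R + 1) * Real.exp (-(astar * Real.exp (δ * ϑ * R) / (2 * (R + 1)))) +
        C₂ * (R + 1) *
          Real.exp (-(c * (Real.exp (δ * ϑ * R) / (2 * (R + 1))) ^ ((2 : ℝ) / 3))) := by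

  classical
  set M := ∫ ω, Real.exp (astar * W ω) with hM
  have hM0 : 0 ≤ M := integral_nonneg fun ω => (Real.exp_pos _).le
  refine ⟨M + 1, by linarith, C, hC, fun R => ?_⟩
  have hRpos : (0:ℝ) < (R:ℝ) + 1 := by positivity
  set t : ℝ := Real.exp (δ * ϑ * R) / (2 * ((R:ℝ) + 1)) with ht
  have htpos : 0 < t := by
    rw [ht]; positivity
  set A := {ω : Ω | Real.exp ((1 + δ) * ϑ * R) ≤ ∑ k ∈ range (R + 1), (Z k ω : ℝ)} with hA
  set B := {ω : Ω | t ≤ W ω} with hB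
  set D : ℕ → Set Ω := fun k => {ω | t ≤ |Real.exp (-(ϑ * k)) * (Z k ω : ℝ) - W ω|} with hD
  -- inclusion
  have hsub : A ⊆ ⋃ k ∈ range (R + 1), (B ∪ D k) := by
    intro ω hω
    by_contra hcon
    simp only [Set.mem_iUnion, Set.mem_union, hB, hD, Set.mem_setOf_eq, not_exists, not_or,
      not_le] at hcon
    have hlt : ∀ k ∈ range (R + 1), (Z k ω : ℝ) < Real.exp (ϑ * R) * (2 * t) := by
      intro k hk
      obtain ⟨h1, h2⟩ := hcon k hk
      have hWk : Real.exp (-(ϑ * k)) * (Z k ω : ℝ) < 2 * t := by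
        have := abs_lt.mp h2
        linarith [this.1, this.2]
      have hZk : (Z k ω : ℝ) = Real.exp (ϑ * k) * (Real.exp (-(ϑ * k)) * (Z k ω : ℝ)) := by
        rw [← mul_assoc, ← Real.exp_add]; simp
      rw [hZk]
      have hek : Real.exp (ϑ * k) ≤ Real.exp (ϑ * R) := by
        apply Real.exp_le_exp.mpr
        have : (k:ℝ) ≤ (R:ℝ) := by
          exact_mod_cast Nat.lt_succ_iff.mp (mem_range.mp hk)
        nlinarith
      have hWknn : 0 ≤ Real.exp (-(ϑ * k)) * (Z k ω : ℝ) := by positivity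
      calc Real.exp (ϑ * k) * (Real.exp (-(ϑ * k)) * (Z k ω : ℝ))
          ≤ Real.exp (ϑ * R) * (Real.exp (-(ϑ * k)) * (Z k ω : ℝ)) := by
            apply mul_le_mul_of_nonneg_right hek hWknn
        _ < Real.exp (ϑ * R) * (2 * t) := by
            apply mul_lt_mul_of_pos_left hWk (Real.exp_pos _)
    have hsum : ∑ k ∈ range (R + 1), (Z k ω : ℝ) <
        ∑ _k ∈ range (R + 1), Real.exp (ϑ * R) * (2 * t) :=
      Finset.sum_lt_sum_of_nonempty (⟨0, mem_range.mpr (Nat.succ_pos R)⟩) hlt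
    have hconst : ∑ _k ∈ range (R + 1), Real.exp (ϑ * R) * (2 * t)
        = Real.exp ((1 + δ) * ϑ * R) := by
      rw [Finset.sum_const, card_range, nsmul_eq_mul, ht]
      push_cast
      have hx : Real.exp ((1 + δ) * ϑ * (R:ℝ)) =
          Real.exp (ϑ * (R:ℝ)) * Real.exp (δ * ϑ * (R:ℝ)) := by
        rw [← Real.exp_add]; ring_nf
      field_simp
      rw [← Real.exp_add]; congr 1
      ring
    have := hω
    rw [hA, Set.mem_setOf_eq] at this
    rw [hconst] at hsum
    linarith
  -- measure bound
  have hmeas : ℙ A ≤ ∑ k ∈ range (R + 1), (ℙ B + ℙ (D k)) :=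
    (measure_mono hsub).trans ((measure_biUnion_finset_le _ _).trans
      (Finset.sum_le_sum fun k _ => measure_union_le _ _))
  have hfin : ∑ k ∈ range (R + 1), (ℙ B + ℙ (D k)) ≠ ⊤ := by
    exact (ENNReal.sum_lt_top.mpr fun k _ =>
      ENNReal.add_lt_top.mpr ⟨measure_lt_top _ _, measure_lt_top _ _⟩).ne
  have h1 : (ℙ A).toReal ≤ ∑ k ∈ range (R + 1), ((ℙ B).toReal + (ℙ (D k)).toReal) := by
    have := ENNReal.toReal_mono hfin hmeas
    refine this.trans_eq ?_
    rw [ENNReal.toReal_sum fun k _ =>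
      (ENNReal.add_lt_top.mpr ⟨measure_lt_top _ _, measure_lt_top _ _⟩).ne]
    exact Finset.sum_congr rfl fun k _ => ENNReal.toReal_add (measure_ne_top _ _)
      (measure_ne_top _ _)
  -- Markov bound for B
  have hBbound : (ℙ B).toReal ≤ M * Real.exp (-(astar * t)) := by
    have hmar := mul_meas_ge_le_integral_of_nonneg
      (μ := (ℙ : Measure Ω)) (f := fun ω => Real.exp (astar * W ω))
      (Filter.Eventually.of_forall fun ω => (Real.exp_pos _).le) hint (Real.exp (astar * t))
    have hset : {x : Ω | Real.exp (astar * t) ≤ Real.exp (astar * W x)} = B := by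
      ext ω
      simp only [hB, Set.mem_setOf_eq, Real.exp_le_exp]
      exact mul_le_mul_iff_right₀ hastar
    rw [hset] at hmar
    have hexp : (0:ℝ) < Real.exp (astar * t) := Real.exp_pos _
    rw [Real.exp_neg, ← div_eq_mul_inv, le_div_iff₀ hexp, mul_comm]
    exact hmar
  -- deviation bound for D k
  have hDbound : ∀ k ∈ range (R + 1),
      (ℙ (D k)).toReal ≤ C * Real.exp (-(c * t ^ ((2:ℝ)/3))) := by
    intro k _
    refine (hdev t htpos k).trans ?_
    apply mul_le_mul_of_nonneg_left _ hC.le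
    apply Real.exp_le_exp.mpr
    have h1 : (1:ℝ) ≤ Real.exp (ϑ * k / 3) := by
      rw [Real.one_le_exp_iff]
      positivity
    have h2 : 0 ≤ c * t ^ ((2:ℝ)/3) := by positivity
    nlinarith
  have h2 : ∑ k ∈ range (R + 1), ((ℙ B).toReal + (ℙ (D k)).toReal) ≤
      ((R:ℝ) + 1) * (M * Real.exp (-(astar * t))) +
      ((R:ℝ) + 1) * (C * Real.exp (-(c * t ^ ((2:ℝ)/3)))) := by
    calc ∑ k ∈ range (R + 1), ((ℙ B).toReal + (ℙ (D k)).toReal)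
        ≤ ∑ _k ∈ range (R + 1),
            (M * Real.exp (-(astar * t)) + C * Real.exp (-(c * t ^ ((2:ℝ)/3)))) := by
          apply Finset.sum_le_sum
          intro k hk
          exact add_le_add hBbound (hDbound k hk)
      _ = ((R:ℝ) + 1) * (M * Real.exp (-(astar * t))) +
          ((R:ℝ) + 1) * (C * Real.exp (-(c * t ^ ((2:ℝ)/3)))) := by
          rw [Finset.sum_const, card_range, nsmul_eq_mul]
          push_cast
          ring
  have hfinal := h1.trans h2
  have hteq : astar * t = astar * Real.exp (δ * ϑ * R) / (2 * ((R:ℝ) + 1)) := by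
    rw [ht]; ring
  rw [hteq] at hfinal
  have hexp1 : (0:ℝ) < Real.exp (-(astar * Real.exp (δ * ϑ * ↑R) / (2 * (↑R + 1)))) :=
    Real.exp_pos _
  push_cast
  calc (ℙ A).toReal ≤ ((R:ℝ) + 1) *
        (M * Real.exp (-(astar * Real.exp (δ * ϑ * R) / (2 * ((R:ℝ) + 1))))) +
        ((R:ℝ) + 1) * (C * Real.exp (-(c * t ^ ((2:ℝ)/3)))) := hfinal
    _ ≤ (M + 1) * ((R:ℝ) + 1) *
        Real.exp (-(astar * Real.exp (δ * ϑ * R) / (2 * ((R:ℝ) + 1)))) +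
        C * ((R:ℝ) + 1) * Real.exp (-(c * t ^ ((2:ℝ)/3))) := by
          nlinarith [hexp1, Real.exp_pos (-(c * t ^ ((2:ℝ)/3))), hRpos]
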